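/- If σ_n is a conjugation-invariant random permutation of S_n (its law is invariant under σ_n ↦ σ⁻¹σ_nσ for every σ ∈ S_n), and T is the Markov operator that, given a realization with more than one cycle, composes it with a uniformly random transposition (i,j) where j is not in the cycle of i (and fixes one-cycle permutations), then T^{n−1}(σ_n) is uniformly distributed on the set of n-cycles of S_n. -/

import Mathlib

open Finset
open scoped Classical

/-- The number of cycles of a permutation of `Fin n`, counting fixed points as
(singleton) cycles. -/
noncomputable def numCycles {n : ℕ} (σ : Equiv.Perm (Fin n)) : ℕ :=
  σ.cycleType.card + (Finset.univ.filter fun x => σ x = x).card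

/-- The transition matrix of the Markov chain `T`: from a permutation `σ` with more
than one cycle, choose a couple `(i,j)` uniformly among those with `j` not in the
cycle of `σ` containing `i`, and move to `σ ∘ (i,j)`; permutations with a single
cycle are fixed. -/
noncomputable def stepMat (n : ℕ) (σ ρ : Equiv.Perm (Fin n)) : ℝ :=
  if numCycles σ = 1 then (if ρ = σ then 1 else 0)
  else ((Finset.univ.filter (fun p : Fin n × Fin n =>
      ¬ σ.SameCycle p.1 p.2 ∧ ρ = σ * Equiv.swap p.1 p.2)).card : ℝ) /
    ((Finset.univ.filter (fun p : Fin n × Fin n => ¬ σ.SameCycle p.1 p.2)).card : ℝ)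

/-- One step of the Markov chain applied to a distribution `μ` on `S_n`. -/
noncomputable def evolve (n : ℕ) (μ : Equiv.Perm (Fin n) → ℝ) :
    Equiv.Perm (Fin n) → ℝ :=
  fun ρ => ∑ σ : Equiv.Perm (Fin n), μ σ * stepMat n σ ρ

namespace MyAux

open Equiv Equiv.Perm

variable {n : ℕ}

noncomputable def cls (σ : Perm (Fin n)) (x : Fin n) : Finset (Fin n) :=
  univ.filter (σ.SameCycle x)

noncomputable def classesOf (σ : Perm (Fin n)) : Finset (Finset (Fin n)) :=
  univ.image (cls σ)

theorem mem_cls {σ : Perm (Fin n)} {x y : Fin n} : y ∈ cls σ x ↔ σ.SameCycle x y := by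
  simp [cls]

theorem cls_eq_iff {σ : Perm (Fin n)} {x y : Fin n} :
    cls σ x = cls σ y ↔ σ.SameCycle x y := by
  constructor
  · intro h
    have : y ∈ cls σ x := h ▸ mem_cls.2 (SameCycle.refl σ y)
    exact mem_cls.1 this
  · intro h
    ext z
    simp only [mem_cls]
    exact ⟨fun hz => (h.symm.trans hz), fun hz => h.trans hz⟩

theorem cls_fixed {σ : Perm (Fin n)} {x : Fin n} (h : σ x = x) : cls σ x = {x} := by
  ext y
  simp only [mem_cls, Finset.mem_singleton]
  constructor
  · rintro ⟨k, hk⟩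
    rw [Equiv.Perm.zpow_apply_eq_self_of_apply_eq_self h] at hk
    exact hk.symm
  · rintro rfl; exact SameCycle.refl σ y

theorem cls_moved {σ : Perm (Fin n)} {x : Fin n} (h : σ x ≠ x) :
    cls σ x = (σ.cycleOf x).support := by
  ext y
  rw [mem_cls, Equiv.Perm.mem_support_cycleOf_iff]
  exact ⟨fun hy => ⟨hy, Equiv.Perm.mem_support.2 h⟩, fun hy => hy.1⟩

theorem numCycles_eq_card_classes (σ : Perm (Fin n)) :
    numCycles σ = (classesOf σ).card := by
  have huniv : (univ : Finset (Fin n)) = σ.support ∪ (univ.filter fun x => σ x = x) := by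
    ext x
    simp only [Finset.mem_union, Finset.mem_filter, Finset.mem_univ, true_and,
      Equiv.Perm.mem_support]
    tauto
  have himg : classesOf σ =
      σ.support.image (cls σ) ∪ (univ.filter fun x => σ x = x).image (cls σ) := by
    rw [classesOf]
    conv_lhs => rw [huniv]
    rw [Finset.image_union]
  -- the image over fixed points
  have hfix : (univ.filter fun x => σ x = x).image (cls σ)
      = (univ.filter fun x => σ x = x).image (fun x => ({x} : Finset (Fin n))) := by
    apply Finset.image_congr
    intro x hx
    simp only [Finset.mem_coe, Finset.mem_filter] at hx
    exact cls_fixed hx.2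
  have hfixcard : ((univ.filter fun x => σ x = x).image (cls σ)).card
      = (univ.filter fun x => σ x = x).card := by
    rw [hfix]
    apply Finset.card_image_of_injOn
    intro x _ y _ hxy
    simpa using hxy
  -- the image over moved points
  have hmov : σ.support.image (cls σ) = σ.cycleFactorsFinset.image Equiv.Perm.support := by
    ext C
    simp only [Finset.mem_image]
    constructor
    · rintro ⟨x, hx, rfl⟩
      refine ⟨σ.cycleOf x, Equiv.Perm.cycleOf_mem_cycleFactorsFinset_iff.2 hx, ?_⟩
      exact (cls_moved (Equiv.Perm.mem_support.1 hx)).symm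
    · rintro ⟨c, hc, rfl⟩
      have hcyc : c.IsCycle := (Equiv.Perm.mem_cycleFactorsFinset_iff.1 hc).1
      obtain ⟨a, ha⟩ := hcyc.nonempty_support
      have hac : c = σ.cycleOf a := Equiv.Perm.cycle_is_cycleOf ha hc
      have hamem : a ∈ σ.support :=
        Equiv.Perm.mem_cycleFactorsFinset_support_le hc ha
      refine ⟨a, hamem, ?_⟩
      rw [cls_moved (Equiv.Perm.mem_support.1 hamem), ← hac]
  have hmovcard : (σ.support.image (cls σ)).card = σ.cycleType.card := by
    rw [hmov, Equiv.Perm.cycleType_def, Multiset.card_map]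
    rw [Finset.card_image_of_injOn]
    · rfl
    · intro c hc d hd hcd
      simp only [Finset.mem_coe] at hc hd
      have hcyc : c.IsCycle := (Equiv.Perm.mem_cycleFactorsFinset_iff.1 hc).1
      obtain ⟨a, ha⟩ := hcyc.nonempty_support
      have h1 : c = σ.cycleOf a := Equiv.Perm.cycle_is_cycleOf ha hc
      have h2 : d = σ.cycleOf a := Equiv.Perm.cycle_is_cycleOf (hcd ▸ ha) hd
      rw [h1, h2]
  -- disjointness
  have hdisj : Disjoint (σ.support.image (cls σ))
      ((univ.filter fun x => σ x = x).image (cls σ)) := by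
    rw [Finset.disjoint_left]
    rintro C hC hC'
    rw [hfix] at hC'
    simp only [Finset.mem_image, Finset.mem_filter, Finset.mem_univ, true_and] at hC hC'
    obtain ⟨x, hx, rfl⟩ := hC
    obtain ⟨y, hy, hxy⟩ := hC'
    have : x ∈ cls σ x := mem_cls.2 (SameCycle.refl σ x)
    rw [← hxy] at this
    simp only [Finset.mem_singleton] at this
    subst this
    exact (Equiv.Perm.mem_support.1 hx) hy
  rw [numCycles, himg, Finset.card_union_of_disjoint hdisj, hfixcard, hmovcard]


section Merge

variable {σ : Perm (Fin n)} {i j : Fin n}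

/-- Auxiliary: where iterates of `σ * swap i j` can live. -/
theorem auxC (h : ¬σ.SameCycle i j) (k : ℕ) (x : Fin n) :
    σ.SameCycle x (((σ * Equiv.swap i j) ^ k) x) ∨
      (σ.SameCycle x i ∧ σ.SameCycle j (((σ * Equiv.swap i j) ^ k) x)) ∨
      (σ.SameCycle x j ∧ σ.SameCycle i (((σ * Equiv.swap i j) ^ k) x)) := by
  set τ := σ * Equiv.swap i j with hτ
  induction k with
  | zero => simp [SameCycle.refl]
  | succ k ih =>
    set y := (τ ^ k) x with hy
    have hstep : (τ ^ (k + 1)) x = σ (Equiv.swap i j y) := by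
      rw [pow_succ', Equiv.Perm.mul_apply, ← hy, hτ, Equiv.Perm.mul_apply]
    rw [hstep]
    by_cases hyi : y = i
    · rw [hyi, Equiv.swap_apply_left]
      rcases ih with h1 | h2 | h3
      · rw [hyi] at h1
        exact Or.inr (Or.inl ⟨h1, sameCycle_apply_right.2 (SameCycle.refl σ j)⟩)
      · rw [hyi] at h2; exact absurd h2.2.symm h
      · exact Or.inl (h3.1.trans (sameCycle_apply_right.2 (SameCycle.refl σ j)))
    · by_cases hyj : y = j
      · rw [hyj, Equiv.swap_apply_right]
        rcases ih with h1 | h2 | h3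
        · rw [hyj] at h1
          exact Or.inr (Or.inr ⟨h1, sameCycle_apply_right.2 (SameCycle.refl σ i)⟩)
        · exact Or.inl (h2.1.trans (sameCycle_apply_right.2 (SameCycle.refl σ i)))
        · rw [hyj] at h3; exact absurd h3.2 h
      · rw [Equiv.swap_apply_of_ne_of_ne hyi hyj]
        rcases ih with h1 | h2 | h3
        · exact Or.inl (h1.trans (sameCycle_apply_right.2 (SameCycle.refl σ y)))
        · exact Or.inr (Or.inl ⟨h2.1, h2.2.trans (sameCycle_apply_right.2 (SameCycle.refl σ y))⟩)
        · exact Or.inr (Or.inr ⟨h3.1, h3.2.trans (sameCycle_apply_right.2 (SameCycle.refl σ y))⟩)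

theorem sameCycle_swap_self (h : ¬σ.SameCycle i j) : (σ * Equiv.swap i j).SameCycle j i := by
  set τ := σ * Equiv.swap i j with hτ
  have hex : ∃ k, 0 < k ∧ (σ ^ k) i = i :=
    ⟨orderOf σ, orderOf_pos σ, by rw [pow_orderOf_eq_one]; rfl⟩
  set m := Nat.find hex with hmdef
  have hm := Nat.find_spec hex
  have key : ∀ d, 1 + d ≤ m → (τ ^ (1 + d)) j = (σ ^ (1 + d)) i := by
    intro d
    induction d with
    | zero =>
      intro _
      simp [hτ, pow_one, Equiv.Perm.mul_apply, Equiv.swap_apply_right]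
    | succ d ih =>
      intro hd
      have hz := ih (by omega)
      have h1 : (τ ^ (1 + (d + 1))) j = τ ((σ ^ (1 + d)) i) := by
        rw [show 1 + (d + 1) = (1 + d) + 1 by omega, pow_succ', Equiv.Perm.mul_apply, hz]
      set z := (σ ^ (1 + d)) i with hzdef
      have hzi : z ≠ i := by
        intro hzi
        exact Nat.find_min hex (m := 1 + d) (by omega) ⟨by omega, hzi⟩
      have hzj : z ≠ j := by
        intro hzj
        exact h ⟨(1 + d : ℕ), by rw [zpow_natCast, ← hzdef]; exact hzj⟩
      rw [h1, hτ, Equiv.Perm.mul_apply, Equiv.swap_apply_of_ne_of_ne hzi hzj,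
        show 1 + (d + 1) = (1 + d) + 1 by omega, pow_succ', Equiv.Perm.mul_apply, ← hzdef]
  have hfin : (τ ^ m) j = i := by
    have hk := key (m - 1) (by omega)
    rw [show 1 + (m - 1) = m by omega] at hk
    rw [hk]
    exact hm.2
  exact ⟨(m : ℤ), by rw [zpow_natCast]; exact hfin⟩

theorem sameCycle_to_mul_swap (h : ¬σ.SameCycle i j) {x y : Fin n}
    (hxy : σ.SameCycle x y) : (σ * Equiv.swap i j).SameCycle x y := by
  set τ := σ * Equiv.swap i j with hτ
  have hji : τ.SameCycle j i := sameCycle_swap_self h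
  have step : ∀ z, τ.SameCycle z (σ z) := by
    intro z
    by_cases hzi : z = i
    · have hv : σ z = τ j := by
        rw [hzi, hτ]; simp [Equiv.Perm.mul_apply, Equiv.swap_apply_right]
      have h1 : τ.SameCycle z j := by rw [hzi]; exact hji.symm
      rw [hv]
      exact h1.trans (sameCycle_apply_right.2 (SameCycle.refl τ j))
    · by_cases hzj : z = j
      · have hv : σ z = τ i := by
          rw [hzj, hτ]; simp [Equiv.Perm.mul_apply, Equiv.swap_apply_left]
        have h1 : τ.SameCycle z i := by rw [hzj]; exact hji
        rw [hv]
        exact h1.trans (sameCycle_apply_right.2 (SameCycle.refl τ i))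
      · have hv : σ z = τ z := by
          rw [hτ]; simp [Equiv.Perm.mul_apply, Equiv.swap_apply_of_ne_of_ne hzi hzj]
        rw [hv]
        exact sameCycle_apply_right.2 (SameCycle.refl τ z)
  obtain ⟨k, -, rfl⟩ := hxy.exists_pow_eq'
  clear hxy
  induction k with
  | zero => simpa using SameCycle.refl τ x
  | succ k ih =>
    rw [pow_succ', Equiv.Perm.mul_apply]
    exact ih.trans (step _)

theorem sameCycle_mul_swap (h : ¬σ.SameCycle i j) (x y : Fin n) :
    (σ * Equiv.swap i j).SameCycle x y ↔
      σ.SameCycle x y ∨ (σ.SameCycle x i ∧ σ.SameCycle j y) ∨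
        (σ.SameCycle x j ∧ σ.SameCycle i y) := by
  constructor
  · intro hxy
    obtain ⟨k, -, rfl⟩ := hxy.exists_pow_eq'
    exact auxC h k x
  · rintro (h1 | ⟨h1, h2⟩ | ⟨h1, h2⟩)
    · exact sameCycle_to_mul_swap h h1
    · exact (sameCycle_to_mul_swap h h1).trans
        (((sameCycle_swap_self h).symm).trans (sameCycle_to_mul_swap h h2))
    · exact (sameCycle_to_mul_swap h h1).trans
        ((sameCycle_swap_self h).trans (sameCycle_to_mul_swap h h2))

theorem cls_mul_swap (h : ¬σ.SameCycle i j) (x : Fin n) :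
    cls (σ * Equiv.swap i j) x =
      if σ.SameCycle i x ∨ σ.SameCycle j x then cls σ i ∪ cls σ j else cls σ x := by
  split_ifs with hx
  · ext y
    rw [mem_cls, sameCycle_mul_swap h, Finset.mem_union, mem_cls, mem_cls]
    rcases hx with hx | hx
    · constructor
      · rintro (h1 | ⟨h1, h2⟩ | ⟨h1, h2⟩)
        · exact Or.inl (hx.trans h1)
        · exact Or.inr h2
        · exact absurd (hx.trans h1) h
      · rintro (h1 | h1)
        · exact Or.inl (hx.symm.trans h1)
        · exact Or.inr (Or.inl ⟨hx.symm, h1⟩)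
    · constructor
      · rintro (h1 | ⟨h1, h2⟩ | ⟨h1, h2⟩)
        · exact Or.inr (hx.trans h1)
        · exact absurd (hx.trans h1).symm h
        · exact Or.inl h2
      · rintro (h1 | h1)
        · exact Or.inr (Or.inr ⟨hx.symm, h1⟩)
        · exact Or.inl (hx.symm.trans h1)
  · push_neg at hx
    ext y
    rw [mem_cls, sameCycle_mul_swap h, mem_cls]
    constructor
    · rintro (h1 | ⟨h1, h2⟩ | ⟨h1, h2⟩)
      · exact h1
      · exact absurd h1.symm hx.1
      · exact absurd h1.symm hx.2
    · exact Or.inl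

theorem numCycles_mul_swap (h : ¬σ.SameCycle i j) :
    numCycles (σ * Equiv.swap i j) + 1 = numCycles σ := by
  have hij : i ≠ j := fun hij => h (hij ▸ SameCycle.refl σ i)
  have hclneq : cls σ i ≠ cls σ j := fun hc => h (cls_eq_iff.1 hc)
  have hcli : cls σ i ∈ classesOf σ := Finset.mem_image_of_mem _ (Finset.mem_univ i)
  have hclj : cls σ j ∈ classesOf σ := Finset.mem_image_of_mem _ (Finset.mem_univ j)
  have hclasses : classesOf (σ * Equiv.swap i j) =
      insert (cls σ i ∪ cls σ j) (((classesOf σ).erase (cls σ i)).erase (cls σ j)) := by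
    ext C
    simp only [classesOf, Finset.mem_insert, Finset.mem_image, Finset.mem_univ, true_and,
      Finset.mem_erase]
    constructor
    · rintro ⟨x, rfl⟩
      rw [cls_mul_swap h x]
      split_ifs with hx
      · exact Or.inl rfl
      · push_neg at hx
        refine Or.inr ⟨?_, ?_, x, rfl⟩
        · intro hc; exact hx.2 (cls_eq_iff.1 hc).symm
        · intro hc; exact hx.1 (cls_eq_iff.1 hc).symm
    · rintro (rfl | ⟨hCj, hCi, x, rfl⟩)
      · exact ⟨i, by rw [cls_mul_swap h i, if_pos (Or.inl (SameCycle.refl σ i))]⟩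
      · refine ⟨x, ?_⟩
        rw [cls_mul_swap h x, if_neg]
        push_neg
        exact ⟨fun hc => hCi (cls_eq_iff.2 hc).symm, fun hc => hCj (cls_eq_iff.2 hc).symm⟩
  have hnotmem : (cls σ i ∪ cls σ j) ∉ ((classesOf σ).erase (cls σ i)).erase (cls σ j) := by
    intro hmem
    have hmem' : (cls σ i ∪ cls σ j) ∈ classesOf σ :=
      Finset.mem_of_mem_erase (Finset.mem_of_mem_erase hmem)
    simp only [classesOf, Finset.mem_image, Finset.mem_univ, true_and] at hmem'
    obtain ⟨x, hx⟩ := hmem'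
    have hi : i ∈ cls σ x := by rw [hx]; exact Finset.mem_union_left _ (mem_cls.2 (SameCycle.refl σ i))
    have hj : j ∈ cls σ x := by rw [hx]; exact Finset.mem_union_right _ (mem_cls.2 (SameCycle.refl σ j))
    exact h ((mem_cls.1 hi).symm.trans (mem_cls.1 hj))
  have h2le : 2 ≤ (classesOf σ).card := Finset.one_lt_card.2 ⟨_, hcli, _, hclj, hclneq⟩
  rw [numCycles_eq_card_classes, numCycles_eq_card_classes, hclasses,
    Finset.card_insert_of_notMem hnotmem,
    Finset.card_erase_of_mem (Finset.mem_erase.2 ⟨fun hc => hclneq hc.symm, hclj⟩),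
    Finset.card_erase_of_mem hcli]
  omega

end Merge

theorem numCycles_pos (hn : 1 ≤ n) (σ : Perm (Fin n)) : 1 ≤ numCycles σ := by
  rw [numCycles_eq_card_classes]
  have : cls σ ⟨0, hn⟩ ∈ classesOf σ := Finset.mem_image_of_mem _ (Finset.mem_univ _)
  exact Finset.card_pos.2 ⟨_, this⟩

theorem numCycles_le (σ : Perm (Fin n)) : numCycles σ ≤ n := by
  rw [numCycles_eq_card_classes, classesOf]
  calc (univ.image (cls σ)).card ≤ (univ : Finset (Fin n)).card := Finset.card_image_le
    _ = n := by simp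

theorem exists_not_sameCycle {σ : Perm (Fin n)} (hn : 1 ≤ n) (h1 : numCycles σ ≠ 1) :
    ∃ p : Fin n × Fin n, ¬σ.SameCycle p.1 p.2 := by
  have h2 : 2 ≤ (classesOf σ).card := by
    have := numCycles_pos hn σ
    rw [numCycles_eq_card_classes] at this h1
    omega
  obtain ⟨a, ha, b, hb, hab⟩ := Finset.one_lt_card.1 h2
  simp only [classesOf, Finset.mem_image, Finset.mem_univ, true_and] at ha hb
  obtain ⟨x, rfl⟩ := ha
  obtain ⟨y, rfl⟩ := hb
  exact ⟨(x, y), fun hc => hab (cls_eq_iff.2 hc)⟩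

theorem sameCycle_conj {σ τ : Perm (Fin n)} {x y : Fin n} :
    (τ⁻¹ * σ * τ).SameCycle x y ↔ σ.SameCycle (τ x) (τ y) := by
  constructor
  · rintro ⟨k, hk⟩
    refine ⟨k, ?_⟩
    have hc : (τ⁻¹ * σ * τ) = τ⁻¹ * σ * (τ⁻¹)⁻¹ := by rw [inv_inv]
    rw [hc, conj_zpow] at hk
    simp only [Equiv.Perm.mul_apply, inv_inv] at hk
    rw [← hk]
    simp [Equiv.Perm.mul_apply]
  · rintro ⟨k, hk⟩
    refine ⟨k, ?_⟩
    have hc : (τ⁻¹ * σ * τ) = τ⁻¹ * σ * (τ⁻¹)⁻¹ := by rw [inv_inv]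
    rw [hc, conj_zpow]
    simp only [Equiv.Perm.mul_apply, inv_inv]
    rw [hk]
    simp

theorem numCycles_conj (σ τ : Perm (Fin n)) :
    numCycles (τ⁻¹ * σ * τ) = numCycles σ := by
  rw [numCycles, numCycles]
  congr 1
  · have : τ⁻¹ * σ * τ = τ⁻¹ * σ * (τ⁻¹)⁻¹ := by rw [inv_inv]
    rw [this, Equiv.Perm.cycleType_conj]
  · apply Finset.card_bij' (fun x _ => τ x) (fun y _ => τ⁻¹ y)
    · intro x hx
      simp only [Finset.mem_filter, Finset.mem_univ, true_and,
        Equiv.Perm.mul_apply] at hx ⊢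
      have := congrArg τ (Finset.mem_filter.1 hx).2
      simpa using this
    · intro y hy
      simp only [Finset.mem_filter, Finset.mem_univ, true_and,
        Equiv.Perm.mul_apply] at hy ⊢
      refine Finset.mem_filter.2 ⟨Finset.mem_univ _, ?_⟩
      simp [hy]
    · intro x hx; simp
    · intro y hy; simp

theorem cycleType_of_numCycles_eq_one {ρ : Perm (Fin n)} (hρ : numCycles ρ = 1) :
    ρ.cycleType = if n = 1 then 0 else {n} := by
  have hsupp : ρ.support.card + (univ.filter fun x => ρ x = x).card = n := by
    have := Finset.card_filter_add_card_filter_not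
      (s := (univ : Finset (Fin n))) (p := fun x => ρ x = x)
    simp only [Finset.card_univ, Fintype.card_fin] at this
    have hs : ρ.support = univ.filter fun x => ¬ρ x = x := by
      ext x; simp [Equiv.Perm.mem_support]
    rw [hs]
    omega
  have hsum : ρ.cycleType.sum = ρ.support.card := Equiv.Perm.sum_cycleType ρ
  rw [numCycles] at hρ
  have hcard : Multiset.card ρ.cycleType ≤ 1 := by omega
  interval_cases hc : Multiset.card ρ.cycleType
  · have hρ1 : ρ = 1 := Equiv.Perm.card_cycleType_eq_zero.1 hc
    have : ρ.cycleType = 0 := by rw [hρ1]; exact Equiv.Perm.cycleType_one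
    rw [this] at hsum ⊢
    simp only [Multiset.sum_zero] at hsum
    have hn1 : n = 1 := by omega
    rw [if_pos hn1]
  · have hcyc : ρ.IsCycle := Equiv.Perm.card_cycleType_eq_one.1 hc
    have hct : ρ.cycleType = {ρ.support.card} := hcyc.cycleType
    have h2 : 2 ≤ ρ.support.card := by
      have : ρ.support.card ∈ ρ.cycleType := by rw [hct]; simp
      exact Equiv.Perm.two_le_of_mem_cycleType this
    have hfix0 : (univ.filter fun x => ρ x = x).card = 0 := by omega
    have hsn : ρ.support.card = n := by omega
    rw [hct, hsn, if_neg (by omega)]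


theorem stepMat_nonneg (σ ρ : Perm (Fin n)) : 0 ≤ stepMat n σ ρ := by
  rw [stepMat]
  split_ifs with h1 h2
  · norm_num
  · norm_num
  · positivity

theorem stepMat_rowsum (hn : 1 ≤ n) (σ : Perm (Fin n)) :
    ∑ ρ : Perm (Fin n), stepMat n σ ρ = 1 := by
  by_cases h1 : numCycles σ = 1
  · simp [stepMat, h1]
  · simp only [stepMat, if_neg h1]
    rw [← Finset.sum_div]
    set D := univ.filter fun p : Fin n × Fin n => ¬σ.SameCycle p.1 p.2 with hD
    have hcard : ∀ ρ : Perm (Fin n),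
        (univ.filter fun p : Fin n × Fin n =>
          ¬σ.SameCycle p.1 p.2 ∧ ρ = σ * Equiv.swap p.1 p.2)
          = D.filter fun p => σ * Equiv.swap p.1 p.2 = ρ := by
      intro ρ
      ext p
      simp only [hD, Finset.mem_filter, Finset.mem_univ, true_and, and_congr_right_iff]
      intro _
      exact eq_comm
    have hfib : ∑ ρ : Perm (Fin n),
        ((univ.filter fun p : Fin n × Fin n =>
          ¬σ.SameCycle p.1 p.2 ∧ ρ = σ * Equiv.swap p.1 p.2).card : ℝ) = (D.card : ℝ) := by
      have h2 := Finset.card_eq_sum_card_fiberwise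
        (f := fun p : Fin n × Fin n => σ * Equiv.swap p.1 p.2) (s := D) (t := univ)
        (fun x _ => Finset.mem_univ _)
      rw [h2]
      push_cast
      apply Finset.sum_congr rfl
      intro ρ _
      rw [hcard ρ]
    rw [hfib]
    have hD0 : D.Nonempty := by
      obtain ⟨p, hp⟩ := exists_not_sameCycle hn h1
      exact ⟨p, by simp [hD, hp]⟩
    have hDne : (D.card : ℝ) ≠ 0 := Nat.cast_ne_zero.2 (Finset.card_pos.2 hD0).ne'
    exact div_self hDne

theorem stepMat_support {σ ρ : Perm (Fin n)} (hne : stepMat n σ ρ ≠ 0) :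
    (numCycles σ = 1 ∧ ρ = σ) ∨ numCycles ρ + 1 = numCycles σ := by
  by_cases h1 : numCycles σ = 1
  · left
    refine ⟨h1, ?_⟩
    by_contra hρ
    simp [stepMat, h1, hρ] at hne
  · right
    simp only [stepMat, if_neg h1] at hne
    have hnum : (univ.filter fun p : Fin n × Fin n =>
        ¬σ.SameCycle p.1 p.2 ∧ ρ = σ * Equiv.swap p.1 p.2).card ≠ 0 := by
      intro h0
      rw [h0] at hne
      simp at hne
    obtain ⟨p, hp⟩ := Finset.card_pos.1 (Nat.pos_of_ne_zero hnum)
    simp only [Finset.mem_filter, Finset.mem_univ, true_and] at hp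
    rw [hp.2]
    exact numCycles_mul_swap hp.1

theorem conj_cancel {τ a b : Perm (Fin n)} (h : τ⁻¹ * a * τ = τ⁻¹ * b * τ) : a = b := by
  have h2 := congrArg (fun x => τ * x * τ⁻¹) h
  simpa [mul_assoc] using h2

theorem stepMat_conj (σ ρ τ : Perm (Fin n)) :
    stepMat n (τ⁻¹ * σ * τ) (τ⁻¹ * ρ * τ) = stepMat n σ ρ := by
  rw [stepMat, stepMat, numCycles_conj]
  by_cases h1 : numCycles σ = 1
  · rw [if_pos h1, if_pos h1]
    by_cases hρ : ρ = σ
    · simp [hρ]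
    · rw [if_neg hρ, if_neg (fun hc => hρ (conj_cancel hc))]
  · rw [if_neg h1, if_neg h1]
    have hnum : (univ.filter fun p : Fin n × Fin n =>
        ¬(τ⁻¹ * σ * τ).SameCycle p.1 p.2 ∧
          τ⁻¹ * ρ * τ = (τ⁻¹ * σ * τ) * Equiv.swap p.1 p.2).card
        = (univ.filter fun p : Fin n × Fin n =>
          ¬σ.SameCycle p.1 p.2 ∧ ρ = σ * Equiv.swap p.1 p.2).card := by
      apply Finset.card_bij' (fun p _ => (τ p.1, τ p.2)) (fun q _ => (τ⁻¹ q.1, τ⁻¹ q.2))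
      · intro p hp
        simp only [Finset.mem_filter, Finset.mem_univ, true_and] at hp ⊢
        obtain ⟨hp1, hp2⟩ := hp
        constructor
        · exact fun hc => hp1 (sameCycle_conj.2 hc)
        · rw [Equiv.swap_apply_apply]
          have h3 : ρ = τ * (τ⁻¹ * σ * τ * Equiv.swap p.1 p.2) * τ⁻¹ := by
            have h4 := congrArg (fun x => τ * x * τ⁻¹) hp2
            simpa [mul_assoc] using h4
          rw [h3]
          group
      · intro q hq
        simp only [Finset.mem_filter, Finset.mem_univ, true_and] at hq ⊢
        obtain ⟨hq1, hq2⟩ := hq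
        constructor
        · intro hc
          apply hq1
          have := sameCycle_conj.1 hc
          simpa using this
        · have hs : Equiv.swap (τ⁻¹ q.1) (τ⁻¹ q.2) = τ⁻¹ * Equiv.swap q.1 q.2 * (τ⁻¹)⁻¹ :=
            Equiv.swap_apply_apply τ⁻¹ q.1 q.2
          rw [hs, hq2]
          group
      · intro p _; simp
      · intro q _; simp
    have hden : (univ.filter fun p : Fin n × Fin n =>
        ¬(τ⁻¹ * σ * τ).SameCycle p.1 p.2).card
        = (univ.filter fun p : Fin n × Fin n => ¬σ.SameCycle p.1 p.2).card := by
      apply Finset.card_bij' (fun p _ => (τ p.1, τ p.2)) (fun q _ => (τ⁻¹ q.1, τ⁻¹ q.2))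
      · intro p hp
        simp only [Finset.mem_filter, Finset.mem_univ, true_and] at hp ⊢
        exact fun hc => hp (sameCycle_conj.2 hc)
      · intro q hq
        simp only [Finset.mem_filter, Finset.mem_univ, true_and] at hq ⊢
        intro hc
        apply hq
        have := sameCycle_conj.1 hc
        simpa using this
      · intro p _; simp
      · intro q _; simp
    rw [hnum, hden]


theorem evolve_nonneg {μ : Perm (Fin n) → ℝ} (hpos : ∀ σ, 0 ≤ μ σ) (ρ : Perm (Fin n)) :
    0 ≤ evolve n μ ρ :=
  Finset.sum_nonneg fun σ _ => mul_nonneg (hpos σ) (stepMat_nonneg σ ρ)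

theorem evolve_sum (hn : 1 ≤ n) {μ : Perm (Fin n) → ℝ}
    (hsum : ∑ σ : Perm (Fin n), μ σ = 1) :
    ∑ ρ : Perm (Fin n), evolve n μ ρ = 1 := by
  unfold evolve
  rw [Finset.sum_comm]
  calc ∑ σ : Perm (Fin n), ∑ ρ : Perm (Fin n), μ σ * stepMat n σ ρ
      = ∑ σ : Perm (Fin n), μ σ * ∑ ρ : Perm (Fin n), stepMat n σ ρ := by
        apply Finset.sum_congr rfl; intro σ _; rw [Finset.mul_sum]
    _ = ∑ σ : Perm (Fin n), μ σ := by
        apply Finset.sum_congr rfl; intro σ _; rw [stepMat_rowsum hn σ, mul_one]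
    _ = 1 := hsum

theorem evolve_conj {μ : Perm (Fin n) → ℝ}
    (hinv : ∀ σ τ : Perm (Fin n), μ (τ⁻¹ * σ * τ) = μ σ) :
    ∀ ρ τ : Perm (Fin n), evolve n μ (τ⁻¹ * ρ * τ) = evolve n μ ρ := by
  intro ρ τ
  unfold evolve
  symm
  apply Fintype.sum_equiv (MulAut.conj τ⁻¹).toEquiv
  intro σ
  have he : (MulAut.conj τ⁻¹).toEquiv σ = τ⁻¹ * σ * τ := by
    simp [MulAut.conj_apply]
  rw [he, hinv σ τ, stepMat_conj σ ρ τ]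

theorem evolve_support (hn : 1 ≤ n) {μ : Perm (Fin n) → ℝ} {m : ℕ}
    (hsupp : ∀ ρ, μ ρ ≠ 0 → numCycles ρ ≤ max 1 m) :
    ∀ ρ, evolve n μ ρ ≠ 0 → numCycles ρ ≤ max 1 (m - 1) := by
  intro ρ hρ
  obtain ⟨σ, -, hσ⟩ := Finset.exists_ne_zero_of_sum_ne_zero hρ
  have hμ : μ σ ≠ 0 := fun h => hσ (by simp [h])
  have hs : stepMat n σ ρ ≠ 0 := fun h => hσ (by simp [h])
  rcases stepMat_support hs with ⟨h1, rfl⟩ | h2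
  · rw [h1]; omega
  · have hσle := hsupp σ hμ
    have hρpos := numCycles_pos hn ρ
    omega



theorem mainAux (n : ℕ) (hn : 1 ≤ n)
    (μ : Equiv.Perm (Fin n) → ℝ) (hpos : ∀ σ, 0 ≤ μ σ)
    (hsum : ∑ σ : Equiv.Perm (Fin n), μ σ = 1)
    (hinv : ∀ σ τ : Equiv.Perm (Fin n), μ (τ⁻¹ * σ * τ) = μ σ) :
    ∀ ρ : Equiv.Perm (Fin n), (evolve n)^[n - 1] μ ρ =
      if numCycles ρ = 1 then
        (1 : ℝ) / ((Finset.univ.filter fun π : Equiv.Perm (Fin n) =>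
          numCycles π = 1).card : ℝ)
      else 0 := by
  have inv : ∀ k : ℕ,
      (∀ σ, 0 ≤ (evolve n)^[k] μ σ) ∧ (∑ σ : Perm (Fin n), (evolve n)^[k] μ σ = 1) ∧
      (∀ σ τ : Perm (Fin n), (evolve n)^[k] μ (τ⁻¹ * σ * τ) = (evolve n)^[k] μ σ) ∧
      (∀ σ, (evolve n)^[k] μ σ ≠ 0 → numCycles σ ≤ max 1 (n - k)) := by
    intro k
    induction k with
    | zero =>
      refine ⟨by simpa using hpos, by simpa using hsum, by simpa using hinv, ?_⟩
      intro σ _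
      have := numCycles_le σ
      omega
    | succ k ih =>
      obtain ⟨ih1, ih2, ih3, ih4⟩ := ih
      rw [Function.iterate_succ_apply']
      refine ⟨evolve_nonneg ih1, evolve_sum hn ih2, ?_, ?_⟩
      · intro σ τ; exact evolve_conj ih3 σ τ
      · have h5 := evolve_support hn (m := n - k) ih4
        intro σ hσ
        have := h5 σ hσ
        omega
  obtain ⟨h1, h2, h3, h4⟩ := inv (n - 1)
  intro ρ
  set ν := (evolve n)^[n - 1] μ with hν
  have hsupp1 : ∀ σ, ν σ ≠ 0 → numCycles σ = 1 := by
    intro σ hσ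
    have ha := h4 σ hσ
    have hb := numCycles_pos hn σ
    omega
  set F := univ.filter fun π : Perm (Fin n) => numCycles π = 1 with hF
  by_cases hρ : numCycles ρ = 1
  · rw [if_pos hρ]
    have hall : ∀ π ∈ F, ν π = ν ρ := by
      intro π hπ
      rw [hF, Finset.mem_filter] at hπ
      have hconj : IsConj ρ π := by
        rw [Equiv.Perm.isConj_iff_cycleType_eq,
          cycleType_of_numCycles_eq_one hρ, cycleType_of_numCycles_eq_one hπ.2]
      obtain ⟨c, hc⟩ := isConj_iff.1 hconj
      rw [← hc]
      have hcc := h3 ρ c⁻¹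
      simpa [inv_inv] using hcc
    have hzero : ∑ σ ∈ univ.filter (fun π : Perm (Fin n) => ¬numCycles π = 1), ν σ = 0 := by
      apply Finset.sum_eq_zero
      intro σ hσ
      rw [Finset.mem_filter] at hσ
      by_contra hne
      exact hσ.2 (hsupp1 σ hne)
    have hsplit : (1 : ℝ) = ∑ σ ∈ F, ν σ := by
      rw [← h2, ← Finset.sum_filter_add_sum_filter_not univ
        (fun π : Perm (Fin n) => numCycles π = 1) ν, hzero, add_zero, hF]
    have hconst : ∑ σ ∈ F, ν σ = (F.card : ℝ) * ν ρ := by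
      rw [Finset.sum_congr rfl hall, Finset.sum_const, nsmul_eq_mul]
    have hcne : (F.card : ℝ) ≠ 0 := by
      intro hc
      rw [hconst, hc, zero_mul] at hsplit
      norm_num at hsplit
    rw [eq_div_iff hcne]
    rw [hconst] at hsplit
    linarith [hsplit]
  · rw [if_neg hρ]
    by_contra hne
    exact hρ (hsupp1 ρ hne)



end MyAux

/-- If `μ` is a conjugation-invariant probability distribution on `S_n`, then after
`n-1` steps of the chain `T` the distribution is uniform on the set of `n`-cycles. -/
theorem evolve_iterate_eq_uniform_cyclic (n : ℕ) (hn : 1 ≤ n)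
    (μ : Equiv.Perm (Fin n) → ℝ) (hpos : ∀ σ, 0 ≤ μ σ)
    (hsum : ∑ σ : Equiv.Perm (Fin n), μ σ = 1)
    (hinv : ∀ σ τ : Equiv.Perm (Fin n), μ (τ⁻¹ * σ * τ) = μ σ) :
    ∀ ρ : Equiv.Perm (Fin n), (evolve n)^[n - 1] μ ρ =
      if numCycles ρ = 1 then
        (1 : ℝ) / ((Finset.univ.filter fun π : Equiv.Perm (Fin n) =>
          numCycles π = 1).card : ℝ)
      else 0 := MyAux.mainAux n hn μ hpos hsum hinv
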